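/- Let θ be an irrational real number, let x : ℤ → ℝ be given by x_n = 2·cos(2πnθ) + 3, and let D := diag(n ↦ exp(2πinθ)) be the diagonal unitary with D e_n = e^{2πinθ} e_n. Then C*({T_x}) = C*({T, D}), i.e. the closed unital star-subalgebra of the bounded operators on ℓ²(ℤ) generated by the weighted shift T_x equals the closed unital star-subalgebra generated by the bilateral shift T together with D. -/

import Mathlib

open Real Complex
open scoped ENNReal

/-- The Hilbert space ℓ²(ℤ) of square-summable complex sequences. -/
noncomputable abbrev H : Type := lp (fun _ : ℤ => ℂ) 2

/-- `C*(S)`: the smallest closed unital star-subalgebra of the bounded operators on ℓ²(ℤ)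
containing `S`. -/
noncomputable def Cstar (S : Set (H →L[ℂ] H)) : StarSubalgebra ℂ (H →L[ℂ] H) :=
  (StarAlgebra.adjoin ℂ S).topologicalClosure



lemma two_toReal : (2 : ℝ≥0∞).toReal = 2 := by norm_num

lemma Hsummable (f : H) : Summable fun n : ℤ => ‖f n‖ ^ (2:ℝ) := by
  have := lp.memℓp f
  rw [memℓp_gen_iff (by norm_num)] at this
  simpa [two_toReal] using this

lemma clm_ext {G G' : H →L[ℂ] H} (h : ∀ (f : H) (n : ℤ), G f n = G' f n) : G = G' :=
  ContinuousLinearMap.ext fun f => lp.ext (funext fun n => h f n)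

set_option maxHeartbeats 2000000 in
lemma exists_wop (c : ℤ → ℂ) (k : ℤ) (C : ℝ) (hC : ∀ n, ‖c n‖ ≤ C) :
    ∃ G : H →L[ℂ] H, ∀ (f : H) (n : ℤ), G f n = c n * f (n + k) := by
  have hC0 : 0 ≤ C := le_trans (norm_nonneg _) (hC 0)
  have hshift : ∀ f : H, Summable fun n : ℤ => ‖f (n + k)‖ ^ (2:ℝ) := fun f =>
    (Equiv.addRight k).summable_iff.2 (Hsummable f)
  have hbd : ∀ (f : H) (n : ℤ), ‖c n * f (n + k)‖ ≤ C * ‖f (n + k)‖ := by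
    intro f n
    calc ‖c n * f (n + k)‖ = ‖c n‖ * ‖f (n + k)‖ := norm_mul _ _
      _ ≤ C * ‖f (n + k)‖ := by gcongr; exact hC n
  have hs : ∀ f : H, Summable fun n : ℤ => (C * ‖f (n + k)‖) ^ (2:ℝ) := by
    intro f
    have := (hshift f).mul_left (C ^ (2:ℝ))
    refine this.congr fun n => ?_
    rw [Real.mul_rpow hC0 (norm_nonneg _)]
  have hmem : ∀ f : H, Memℓp (fun n : ℤ => c n * f (n + k)) 2 := by
    intro f
    apply memℓp_gen
    refine (hs f).of_nonneg_of_le (fun n => ?_) (fun n => ?_)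
    · positivity
    · rw [two_toReal]
      exact Real.rpow_le_rpow (norm_nonneg _) (hbd f n) (by norm_num)
  let L : H →ₗ[ℂ] H :=
    { toFun := fun f => ⟨fun n => c n * f (n + k), hmem f⟩
      map_add' := fun f g => lp.ext (funext fun n => by
        simp [lp.coeFn_add, Pi.add_apply, mul_add]; rfl)
      map_smul' := fun m f => lp.ext (funext fun n => by
        simp [lp.coeFn_smul, Pi.smul_apply, smul_eq_mul]; ring) }
  have hLnorm : ∀ f : H, ‖L f‖ ≤ C * ‖f‖ := by
    intro f
    refine lp.norm_le_of_tsum_le (by rw [two_toReal]; norm_num) (by positivity) ?_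
    rw [two_toReal]
    have h1 : ∑' n : ℤ, ‖(L f : ℤ → ℂ) n‖ ^ (2:ℝ) ≤ ∑' n : ℤ, (C * ‖f (n + k)‖) ^ (2:ℝ) := by
      refine Summable.tsum_le_tsum (fun n => ?_) ?_ (hs f)
      · exact Real.rpow_le_rpow (norm_nonneg _) (hbd f n) (by norm_num)
      · have := (hmem f).summable (p := 2) (by rw [two_toReal]; norm_num)
        simp only [two_toReal] at this; exact this
    have h2 : ∑' n : ℤ, (C * ‖f (n + k)‖) ^ (2:ℝ) = (C * ‖f‖) ^ (2:ℝ) := by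
      have h3 : ∑' n : ℤ, ‖f (n + k)‖ ^ (2:ℝ) = ∑' n : ℤ, ‖f n‖ ^ (2:ℝ) := by
        have := (Equiv.addRight k).tsum_eq (fun n : ℤ => ‖f n‖ ^ (2:ℝ))
        simpa only [Equiv.coe_addRight] using this
      calc ∑' n : ℤ, (C * ‖f (n + k)‖) ^ (2:ℝ)
          = ∑' n : ℤ, C ^ (2:ℝ) * ‖f (n + k)‖ ^ (2:ℝ) := by
            congr 1; funext n; rw [Real.mul_rpow hC0 (norm_nonneg _)]
        _ = C ^ (2:ℝ) * ∑' n : ℤ, ‖f n‖ ^ (2:ℝ) := by rw [tsum_mul_left, h3]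
        _ = C ^ (2:ℝ) * ‖f‖ ^ (2:ℝ) := by
            have h4 : ‖f‖ ^ (2:ℝ) = ∑' n : ℤ, ‖f n‖ ^ (2:ℝ) := by
              simpa only [two_toReal] using lp.norm_rpow_eq_tsum (p := 2) (by norm_num) f
            rw [h4]
        _ = (C * ‖f‖) ^ (2:ℝ) := (Real.mul_rpow hC0 (norm_nonneg _)).symm
    exact h1.trans_eq h2
  exact ⟨L.mkContinuous C hLnorm, fun f n => rfl⟩


set_option maxHeartbeats 1000000 in
lemma star_wop {G G' : H →L[ℂ] H} (c : ℤ → ℂ) (k : ℤ)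
    (hG : ∀ (f : H) (n : ℤ), G f n = c n * f (n + k))
    (hG' : ∀ (f : H) (n : ℤ), G' f n = (starRingEnd ℂ) (c (n - k)) * f (n - k)) :
    star G = G' := by
  rw [ContinuousLinearMap.star_eq_adjoint]
  symm
  rw [ContinuousLinearMap.eq_adjoint_iff]
  intro u v
  rw [lp.inner_eq_tsum, lp.inner_eq_tsum]
  have := (Equiv.addRight k).tsum_eq
    (fun n : ℤ => (inner ℂ ((G' u) n) (v n) : ℂ))
  simp only [Equiv.coe_addRight] at this
  rw [← this]
  congr 1
  funext m
  simp only [hG, hG', RCLike.inner_apply, map_mul, RingHomCompTriple.comp_apply,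
    RingHom.id_apply, starRingEnd_self_apply, add_sub_cancel_right]
  ring



set_option maxHeartbeats 1000000 in
lemma opnorm_le_diag {G : H →L[ℂ] H} (d : ℤ → ℂ) {C : ℝ} (hC : 0 ≤ C)
    (hd : ∀ n, ‖d n‖ ≤ C) (hG : ∀ (f : H) (n : ℤ), G f n = d n * f n) : ‖G‖ ≤ C := by
  refine ContinuousLinearMap.opNorm_le_bound _ hC (fun f => ?_)
  refine lp.norm_le_of_tsum_le (by rw [two_toReal]; norm_num) (by positivity) ?_
  rw [two_toReal]
  have hsum : Summable fun n : ℤ => ‖(G f) n‖ ^ (2:ℝ) := Hsummable (G f)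
  have hs2 : Summable fun n : ℤ => (C * ‖f n‖) ^ (2:ℝ) := by
    have := (Hsummable f).mul_left (C ^ (2:ℝ))
    refine this.congr fun n => ?_
    rw [Real.mul_rpow hC (norm_nonneg _)]
  have h1 : ∑' n : ℤ, ‖(G f) n‖ ^ (2:ℝ) ≤ ∑' n : ℤ, (C * ‖f n‖) ^ (2:ℝ) := by
    refine Summable.tsum_le_tsum (fun n => ?_) hsum hs2
    refine Real.rpow_le_rpow (norm_nonneg _) ?_ (by norm_num)
    rw [hG]
    calc ‖d n * f n‖ = ‖d n‖ * ‖f n‖ := norm_mul _ _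
      _ ≤ C * ‖f n‖ := by gcongr; exact hd n
  have h2 : ∑' n : ℤ, (C * ‖f n‖) ^ (2:ℝ) = (C * ‖f‖) ^ (2:ℝ) := by
    have h4 : ‖f‖ ^ (2:ℝ) = ∑' n : ℤ, ‖f n‖ ^ (2:ℝ) := by
      simpa only [two_toReal] using lp.norm_rpow_eq_tsum (p := 2) (by norm_num) f
    calc ∑' n : ℤ, (C * ‖f n‖) ^ (2:ℝ)
        = ∑' n : ℤ, C ^ (2:ℝ) * ‖f n‖ ^ (2:ℝ) := by
          congr 1; funext n; rw [Real.mul_rpow hC (norm_nonneg _)]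
      _ = C ^ (2:ℝ) * ‖f‖ ^ (2:ℝ) := by rw [tsum_mul_left, h4]
      _ = (C * ‖f‖) ^ (2:ℝ) := (Real.mul_rpow hC (norm_nonneg _)).symm
  exact h1.trans_eq h2

lemma pow_diag {A : H →L[ℂ] H} {a : ℤ → ℂ} (hA : ∀ (f : H) (n : ℤ), A f n = a n * f n) :
    ∀ (k : ℕ) (f : H) (n : ℤ), (A ^ k) f n = (a n) ^ k * f n := by
  intro k
  induction k with
  | zero => intro f n; simp [ContinuousLinearMap.one_apply]
  | succ k ih =>
    intro f n
    rw [pow_succ, ContinuousLinearMap.mul_apply, ih, hA, pow_succ]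
    ring

lemma aeval_diag {A : H →L[ℂ] H} {a : ℤ → ℝ} (hA : ∀ (f : H) (n : ℤ), A f n = (a n : ℂ) * f n)
    (p : Polynomial ℝ) :
    ∀ (f : H) (n : ℤ), (Polynomial.aeval A (p.map (algebraMap ℝ ℂ))) f n
      = ((p.eval (a n) : ℝ) : ℂ) * f n := by
  induction p using Polynomial.induction_on' with
  | add p q hp hq =>
    intro f n
    rw [Polynomial.map_add, map_add, ContinuousLinearMap.add_apply]
    have := lp.coeFn_add ((Polynomial.aeval A (p.map (algebraMap ℝ ℂ))) f)
      ((Polynomial.aeval A (q.map (algebraMap ℝ ℂ))) f)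
    rw [congrFun this n, Pi.add_apply, hp, hq, Polynomial.eval_add]
    push_cast
    ring
  | monomial k b =>
    intro f n
    rw [Polynomial.map_monomial, Polynomial.aeval_monomial, ContinuousLinearMap.mul_apply,
      Polynomial.eval_monomial]
    have halg : ∀ (g : H) (m : ℤ), (algebraMap ℂ (H →L[ℂ] H) ((algebraMap ℝ ℂ) b)) g m
        = (b : ℂ) * g m := by
      intro g m
      rw [Algebra.algebraMap_eq_smul_one, ContinuousLinearMap.smul_apply,
        ContinuousLinearMap.one_apply]
      rw [congrFun (lp.coeFn_smul _ _) m, Pi.smul_apply, smul_eq_mul]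
      rfl
    rw [halg, pow_diag hA]
    push_cast
    ring

lemma aeval_mem {S : StarSubalgebra ℂ (H →L[ℂ] H)} {A : H →L[ℂ] H} (hA : A ∈ S)
    (q : Polynomial ℂ) : Polynomial.aeval A q ∈ S := by
  induction q using Polynomial.induction_on' with
  | add p q hp hq => rw [map_add]; exact add_mem hp hq
  | monomial k b =>
    rw [Polynomial.aeval_monomial]
    exact mul_mem (StarSubalgebra.algebraMap_mem S b) (pow_mem hA k)

lemma diag_mem {S : StarSubalgebra ℂ (H →L[ℂ] H)} (hclosed : IsClosed (S : Set (H →L[ℂ] H)))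
    {A : H →L[ℂ] H} (hA : A ∈ S) {a : ℤ → ℝ}
    (hAa : ∀ (f : H) (n : ℤ), A f n = (a n : ℂ) * f n)
    {lo hi : ℝ} (hrange : ∀ n, a n ∈ Set.Icc lo hi)
    {g : ℝ → ℝ} (hg : ContinuousOn g (Set.Icc lo hi))
    {F : H →L[ℂ] H} (hF : ∀ (f : H) (n : ℤ), F f n = ((g (a n) : ℝ) : ℂ) * f n) : F ∈ S := by
  have hmem : F ∈ closure (S : Set (H →L[ℂ] H)) := by
    rw [Metric.mem_closure_iff]
    intro ε hε
    obtain ⟨p, hp⟩ := exists_polynomial_near_of_continuousOn lo hi g hg (ε/2) (by linarith)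
    refine ⟨Polynomial.aeval A (p.map (algebraMap ℝ ℂ)), aeval_mem hA _, ?_⟩
    have hbound : ‖F - Polynomial.aeval A (p.map (algebraMap ℝ ℂ))‖ ≤ ε/2 := by
      refine opnorm_le_diag (fun n => ((g (a n) - p.eval (a n) : ℝ) : ℂ)) (by linarith)
        (fun n => ?_) (fun f n => ?_)
      · rw [Complex.norm_real, Real.norm_eq_abs, abs_sub_comm]
        exact (hp _ (hrange n)).le
      · rw [ContinuousLinearMap.sub_apply, congrFun (lp.coeFn_sub _ _) n, Pi.sub_apply,
          hF, aeval_diag hAa]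
        push_cast
        ring
    rw [dist_eq_norm]
    calc ‖F - Polynomial.aeval A (p.map (algebraMap ℝ ℂ))‖ ≤ ε/2 := hbound
      _ < ε := by linarith
  rwa [hclosed.closure_eq] at hmem


set_option maxHeartbeats 1000000 in
/-- For irrational `θ` and weights `x n = 2 cos(2πnθ) + 3`, the C*-algebra
generated by the weighted shift `T_x` equals the C*-algebra generated by the bilateral
shift `T` together with the diagonal unitary `D = diag (n ↦ exp (2πinθ))`. -/
theorem cstar_weighted_shift_eq_cstar_irrational_rotation
    (θ : ℝ) (hθ : Irrational θ)
    (x : ℤ → ℝ) (hx : ∀ n : ℤ, x n = 2 * Real.cos (2 * Real.pi * n * θ) + 3)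
    (Tx T D : H →L[ℂ] H)
    (hTx : ∀ (f : H) (n : ℤ), Tx f n = (x (n - 1) : ℂ) * f (n - 1))
    (hT : ∀ (f : H) (n : ℤ), T f n = f (n - 1))
    (hD : ∀ (f : H) (n : ℤ),
      D f n = Complex.exp (2 * Real.pi * Complex.I * n * θ) * f n) :
    Cstar {Tx} = Cstar {T, D} := by
  -- basic bounds
  have hx1 : ∀ n, 1 ≤ x n := fun n => by
    rw [hx]; nlinarith [Real.neg_one_le_cos (2 * Real.pi * (n:ℝ) * θ)]
  have hx5 : ∀ n, x n ≤ 5 := fun n => by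
    rw [hx]; nlinarith [Real.cos_le_one (2 * Real.pi * (n:ℝ) * θ)]
  have hx0 : ∀ n, ((x n : ℝ) : ℂ) ≠ 0 := fun n => by
    simp only [ne_eq, Complex.ofReal_eq_zero]; intro h; linarith [hx1 n]
  have hxnorm : ∀ n, ‖((x n : ℝ) : ℂ)‖ ≤ 5 := fun n => by
    rw [Complex.norm_real, Real.norm_eq_abs, _root_.abs_of_nonneg (by linarith [hx1 n])]
    exact hx5 n
  have closed₁ : IsClosed ((Cstar {Tx} : StarSubalgebra ℂ (H →L[ℂ] H)) : Set (H →L[ℂ] H)) :=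
    StarSubalgebra.isClosed_topologicalClosure _
  have hTxS : Tx ∈ Cstar {Tx} :=
    StarSubalgebra.le_topologicalClosure _ (StarAlgebra.subset_adjoin ℂ {Tx} rfl)
  -- star T
  obtain ⟨Ts, hTs⟩ := exists_wop (fun _ => (1:ℂ)) 1 1 (by simp)
  have hTstar : star T = Ts := by
    refine star_wop (fun _ => (1:ℂ)) (-1) (fun f n => ?_) (fun f n => ?_)
    · rw [hT, one_mul, sub_eq_add_neg]
    · rw [hTs, map_one, one_mul, one_mul, sub_neg_eq_add]
  -- star Tx
  obtain ⟨Txs, hTxs⟩ := exists_wop (fun n => ((x n : ℝ) : ℂ)) 1 5 hxnorm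
  have hTxstar : star Tx = Txs := by
    refine star_wop (fun n => ((x (n-1) : ℝ) : ℂ)) (-1) (fun f n => ?_) (fun f n => ?_)
    · simp only [hTx, sub_eq_add_neg]
    · rw [hTxs]
      simp only [sub_neg_eq_add, add_sub_cancel_right, Complex.conj_ofReal]
  -- A = (star Tx) * Tx
  have hAapp : ∀ (f : H) (n : ℤ), (star Tx * Tx) f n = ((x n ^ 2 : ℝ) : ℂ) * f n := by
    intro f n
    rw [ContinuousLinearMap.mul_apply, hTxstar, hTxs, hTx, add_sub_cancel_right]
    push_cast
    ring
  have hAmem : star Tx * Tx ∈ Cstar {Tx} := mul_mem (star_mem hTxS) hTxS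
  have hrange : ∀ n, x n ^ 2 ∈ Set.Icc (1:ℝ) 25 := fun n =>
    ⟨by nlinarith [hx1 n], by nlinarith [hx1 n, hx5 n]⟩
  -- Minv
  obtain ⟨Minv, hMinv⟩ := exists_wop (fun n => (((x n)⁻¹ : ℝ) : ℂ)) 0 1 (fun n => by
    rw [Complex.norm_real, Real.norm_eq_abs, _root_.abs_of_nonneg (inv_nonneg.2 (by linarith [hx1 n]))]
    exact inv_le_one_of_one_le₀ (hx1 n))
  have hMinvS : Minv ∈ Cstar {Tx} := by
    refine diag_mem closed₁ hAmem hAapp hrange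
      (g := fun t => (Real.sqrt t)⁻¹)
      (ContinuousOn.inv₀ Real.continuous_sqrt.continuousOn (fun t ht => by
        rw [Real.sqrt_ne_zero']; linarith [ht.1])) (fun f n => ?_)
    have hsq : Real.sqrt (x n ^ 2) = x n := Real.sqrt_sq (by linarith [hx1 n])
    simp only [hMinv, add_zero, hsq]
  have hTS : T ∈ Cstar {Tx} := by
    have hTeq : T = Tx * Minv := by
      refine clm_ext fun f n => ?_
      rw [hT, ContinuousLinearMap.mul_apply, hTx, hMinv, add_zero, ← mul_assoc]
      rw [← Complex.ofReal_mul, mul_inv_cancel₀ (by linarith [hx1 (n-1)]), Complex.ofReal_one,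
        one_mul]
    rw [hTeq]; exact mul_mem hTxS hMinvS
  -- M = diag x
  obtain ⟨M, hM⟩ := exists_wop (fun n => ((x n : ℝ) : ℂ)) 0 5 hxnorm
  have hMS : M ∈ Cstar {Tx} :=
    diag_mem closed₁ hAmem hAapp hrange (g := Real.sqrt)
      Real.continuous_sqrt.continuousOn (fun f n => by
        have hsq : Real.sqrt (x n ^ 2) = x n := Real.sqrt_sq (by linarith [hx1 n])
        simp only [hM, add_zero, hsq])
  -- Cop = diag cos
  obtain ⟨Cop, hCop⟩ := exists_wop (fun n => ((Real.cos (2*Real.pi*n*θ) : ℝ) : ℂ)) 0 1 (fun n => by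
    rw [Complex.norm_real, Real.norm_eq_abs]; exact Real.abs_cos_le_one _)
  have hCopS : Cop ∈ Cstar {Tx} := by
    have hCeq : Cop = (2⁻¹ : ℂ) • (M - algebraMap ℂ (H →L[ℂ] H) 3) := by
      refine clm_ext fun f n => ?_
      rw [hCop, add_zero, ContinuousLinearMap.smul_apply, congrFun (lp.coeFn_smul _ _) n,
        Pi.smul_apply, smul_eq_mul, ContinuousLinearMap.sub_apply,
        congrFun (lp.coeFn_sub _ _) n, Pi.sub_apply, hM, add_zero,
        Algebra.algebraMap_eq_smul_one, ContinuousLinearMap.smul_apply,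
        ContinuousLinearMap.one_apply, congrFun (lp.coeFn_smul _ _) n, Pi.smul_apply,
        smul_eq_mul]
      have hxn : ((x n : ℝ) : ℂ) = 2 * (Real.cos (2*Real.pi*n*θ) : ℂ) + 3 := by
        rw [hx]; push_cast; ring
      rw [hxn]; ring
    rw [hCeq]
    exact SMulMemClass.smul_mem _ (sub_mem hMS (StarSubalgebra.algebraMap_mem _ 3))
  -- C'op = diag (cos shifted)
  obtain ⟨C'op, hC'op⟩ := exists_wop (fun n => ((Real.cos (2*Real.pi*((n:ℤ)-1)*θ) : ℝ) : ℂ)) 0 1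
    (fun n => by rw [Complex.norm_real, Real.norm_eq_abs]; exact Real.abs_cos_le_one _)
  have hC'S : C'op ∈ Cstar {Tx} := by
    have hC'eq : C'op = T * Cop * star T := by
      refine clm_ext fun f n => ?_
      rw [ContinuousLinearMap.mul_apply, ContinuousLinearMap.mul_apply, hT, hCop, hTstar, hTs,
        hC'op, add_zero, add_zero, one_mul, sub_add_cancel]
      push_cast
      ring
    rw [hC'eq]
    exact mul_mem (mul_mem hTS hCopS) (star_mem hTS)
  -- sin 2πθ ≠ 0
  have hsin : Real.sin (2*Real.pi*θ) ≠ 0 := by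
    intro h
    obtain ⟨m, hm⟩ := Real.sin_eq_zero_iff.1 h
    have hm' : (m : ℝ) * Real.pi = 2 * θ * Real.pi := by rw [hm]; ring
    have h2 : (m : ℝ) = 2 * θ := mul_right_cancel₀ Real.pi_ne_zero hm'
    exact hθ ⟨(m : ℚ)/2, by push_cast; linarith⟩
  -- Sop = diag sin
  obtain ⟨Sop, hSop⟩ := exists_wop (fun n => ((Real.sin (2*Real.pi*n*θ) : ℝ) : ℂ)) 0 1 (fun n => by
    rw [Complex.norm_real, Real.norm_eq_abs]; exact Real.abs_sin_le_one _)
  have hSopS : Sop ∈ Cstar {Tx} := by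
    have hSeq : Sop = ((Real.sin (2*Real.pi*θ) : ℝ) : ℂ)⁻¹ •
        (C'op - ((Real.cos (2*Real.pi*θ) : ℝ) : ℂ) • Cop) := by
      refine clm_ext fun f n => ?_
      rw [hSop, add_zero, ContinuousLinearMap.smul_apply, congrFun (lp.coeFn_smul _ _) n,
        Pi.smul_apply, smul_eq_mul, ContinuousLinearMap.sub_apply,
        congrFun (lp.coeFn_sub _ _) n, Pi.sub_apply, hC'op, add_zero,
        ContinuousLinearMap.smul_apply, congrFun (lp.coeFn_smul _ _) n, Pi.smul_apply,
        smul_eq_mul, hCop, add_zero]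
      have key : Real.sin (2*Real.pi*(n:ℝ)*θ) = (Real.sin (2*Real.pi*θ))⁻¹ *
          (Real.cos (2*Real.pi*((n:ℝ)-1)*θ) - Real.cos (2*Real.pi*θ) * Real.cos (2*Real.pi*(n:ℝ)*θ)) := by
        have harg : 2*Real.pi*((n:ℝ)-1)*θ = 2*Real.pi*(n:ℝ)*θ - 2*Real.pi*θ := by ring
        rw [harg, Real.cos_sub]
        field_simp
        ring
      rw [key]
      push_cast
      ring
    rw [hSeq]
    exact SMulMemClass.smul_mem _ (sub_mem hC'S (SMulMemClass.smul_mem _ hCopS))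
  -- D ∈ Cstar {Tx}
  have hDS : D ∈ Cstar {Tx} := by
    have hDeq : D = Cop + Complex.I • Sop := by
      refine clm_ext fun f n => ?_
      rw [hD, ContinuousLinearMap.add_apply, congrFun (lp.coeFn_add _ _) n, Pi.add_apply,
        hCop, add_zero, ContinuousLinearMap.smul_apply, congrFun (lp.coeFn_smul _ _) n,
        Pi.smul_apply, smul_eq_mul, hSop, add_zero]
      have harg : (2 * (Real.pi:ℂ) * Complex.I * (n:ℂ) * (θ:ℂ))
          = ((2*Real.pi*(n:ℝ)*θ : ℝ) : ℂ) * Complex.I := by push_cast; ring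
      rw [harg, Complex.exp_mul_I]
      push_cast
      ring
    rw [hDeq]
    exact add_mem hCopS (SMulMemClass.smul_mem _ hSopS)
  -- reverse inclusion data
  have hTS₂ : T ∈ Cstar {T, D} :=
    StarSubalgebra.le_topologicalClosure _
      (StarAlgebra.subset_adjoin ℂ {T, D} (Set.mem_insert _ _))
  have hDS₂ : D ∈ Cstar {T, D} :=
    StarSubalgebra.le_topologicalClosure _
      (StarAlgebra.subset_adjoin ℂ {T, D} (Set.mem_insert_of_mem _ rfl))
  -- star D
  obtain ⟨Ds, hDs⟩ := exists_wop
    (fun n => (starRingEnd ℂ) (Complex.exp (2 * (Real.pi:ℂ) * Complex.I * (n:ℂ) * (θ:ℂ)))) 0 1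
    (fun n => by
      have harg : (2 * (Real.pi:ℂ) * Complex.I * (n:ℂ) * (θ:ℂ))
          = ((2*Real.pi*(n:ℝ)*θ : ℝ) : ℂ) * Complex.I := by push_cast; ring
      rw [RCLike.norm_conj, harg, Complex.norm_exp_ofReal_mul_I])
  have hDstar : star D = Ds := by
    refine star_wop (fun n => Complex.exp (2 * (Real.pi:ℂ) * Complex.I * (n:ℂ) * (θ:ℂ))) 0
      (fun f n => ?_) (fun f n => ?_)
    · rw [hD, add_zero]
    · rw [hDs, add_zero]
      simp only [sub_zero]
  have hTxS₂ : Tx ∈ Cstar {T, D} := by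
    have hTxeq : Tx = T * D + T * star D + (3:ℂ) • T := by
      refine clm_ext fun f n => ?_
      rw [ContinuousLinearMap.add_apply, congrFun (lp.coeFn_add _ _) n, Pi.add_apply,
        ContinuousLinearMap.add_apply, congrFun (lp.coeFn_add _ _) n, Pi.add_apply,
        ContinuousLinearMap.mul_apply, hT, hD, ContinuousLinearMap.mul_apply, hT, hDstar, hDs,
        add_zero, ContinuousLinearMap.smul_apply, congrFun (lp.coeFn_smul _ _) n, Pi.smul_apply,
        smul_eq_mul, hT, hTx]
      have hxn : ((x (n-1) : ℝ) : ℂ) = 2 * (Real.cos (2*Real.pi*((n:ℝ)-1)*θ) : ℂ) + 3 := by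
        rw [hx]; push_cast; ring
      have harg : (2 * (Real.pi:ℂ) * Complex.I * ((n-1 : ℤ):ℂ) * (θ:ℂ))
          = ((2*Real.pi*((n:ℝ)-1)*θ : ℝ) : ℂ) * Complex.I := by push_cast; ring
      have hconj : (starRingEnd ℂ) (((2*Real.pi*((n:ℝ)-1)*θ : ℝ) : ℂ) * Complex.I)
          = -(((2*Real.pi*((n:ℝ)-1)*θ : ℝ) : ℂ) * Complex.I) := by
        rw [map_mul, Complex.conj_I, Complex.conj_ofReal]; ring
      rw [hxn, harg, ← Complex.exp_conj, hconj]
      have hneg : (-(((2*Real.pi*((n:ℝ)-1)*θ : ℝ) : ℂ) * Complex.I))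
          = ((-(2*Real.pi*((n:ℝ)-1)*θ) : ℝ) : ℂ) * Complex.I := by push_cast; ring
      rw [hneg, Complex.exp_mul_I, Complex.exp_mul_I]
      push_cast
      simp only [Complex.cos_neg, Complex.sin_neg]
      ring
    rw [hTxeq]
    exact add_mem (add_mem (mul_mem hTS₂ hDS₂) (mul_mem hTS₂ (star_mem hDS₂)))
      (SMulMemClass.smul_mem _ hTS₂)
  -- conclude
  refine le_antisymm ?_ ?_
  · exact StarSubalgebra.topologicalClosure_minimal
      (StarAlgebra.adjoin_le (Set.singleton_subset_iff.2 hTxS₂))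
      (StarSubalgebra.isClosed_topologicalClosure _)
  · refine StarSubalgebra.topologicalClosure_minimal (StarAlgebra.adjoin_le ?_) closed₁
    intro y hy
    rcases hy with rfl | hy
    · exact hTS
    · rcases hy with rfl
      exact hDS
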